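/- arXiv:2207.04437 — 2 statements merged into one kernel-verified Lean document; each statement's English description precedes it below -/
import Mathlib

section
/- Let A be a left R-module with projective presentation σ_A, B a left S-module with projective presentation σ_B, and σ the induced projective presentation of (0,B) ⊕ (A,FA) in (F, S-Mod). Then: (1) if M ∈ D_{σ_A} then (M,0) ∈ D_σ; (2) if N ∈ D_{σ_B} then (0,N) ∈ D_σ; (3) if M ∈ D_{σ_A} and FM ∈ D_{σ_B} then (M,FM) with the identity structure map belongs to D_σ. -/
open CategoryTheory CategoryTheory.Limits

universe v u

section Generic

variable {𝒜 : Type*} [Category.{v} 𝒜]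

/-- For a morphism `σ : P₁ ⟶ P₀`, the class `D_σ` of objects `X` such that
`Hom(σ, X)` is surjective. -/
def Dclass {P₁ P₀ : 𝒜} (σ : P₁ ⟶ P₀) : Set 𝒜 :=
  {X | ∀ g : P₁ ⟶ X, ∃ h : P₀ ⟶ X, σ ≫ h = g}

/-- `Gen T` is the class of objects admitting an epimorphism from a coproduct (direct sum)
of copies of `T`. -/
def Gen (T : 𝒜) : Set 𝒜 :=
  {X | ∃ (ι : Type v) (c : Cofan (fun _ : ι => T)) (_ : IsColimit c) (f : c.pt ⟶ X), Epi f}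

variable [HasZeroMorphisms 𝒜]

/-- A projective presentation `P₁ → P₀ → T → 0` of an object `T`. -/
structure ProjPres (T : 𝒜) where
  P₁ : 𝒜
  P₀ : 𝒜
  σ : P₁ ⟶ P₀
  π : P₀ ⟶ T
  projective₁ : Projective P₁
  projective₀ : Projective P₀
  epi : Epi π
  w : σ ≫ π = 0
  exact : (ShortComplex.mk σ π w).Exact

/-- A class of objects is a torsion class if it is closed under (epimorphic) images,
direct sums (coproducts) and extensions. -/
def IsTorsionClass (𝒞 : Set 𝒜) : Prop :=
  (∀ ⦃X Y : 𝒜⦄ (f : X ⟶ Y), Epi f → X ∈ 𝒞 → Y ∈ 𝒞) ∧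
  (∀ (ι : Type v) (Xs : ι → 𝒜) (c : Cofan Xs), IsColimit c → (∀ i, Xs i ∈ 𝒞) → c.pt ∈ 𝒞) ∧
  (∀ (E : ShortComplex 𝒜), E.ShortExact → E.X₁ ∈ 𝒞 → E.X₃ ∈ 𝒞 → E.X₂ ∈ 𝒞)

/-- `T` is a silting object (with respect to some projective presentation) if it admits a
projective presentation `σ` with `D_σ = Gen T`. -/
def IsSilting (T : 𝒜) : Prop :=
  ∃ p : ProjPres T, Dclass p.σ = Gen T

/-- `T` is a partial silting object if it admits a projective presentation `σ` such that
`D_σ` is a torsion class and `T ∈ D_σ`. -/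
def IsPartialSilting (T : 𝒜) : Prop :=
  ∃ p : ProjPres T, IsTorsionClass (Dclass p.σ) ∧ T ∈ Dclass p.σ

end Generic

section CommaZero

variable {𝒜 : Type*} [Category 𝒜] {ℬ : Type*} [Category ℬ]
  [Preadditive 𝒜] [Preadditive ℬ] (F : 𝒜 ⥤ ℬ) [F.Additive]

instance : HasZeroMorphisms (Comma F (𝟭 ℬ)) where
  zero X Y := ⟨{ left := 0, right := 0, w := by simp }⟩
  comp_zero {X Y} f Z := by
    apply CommaMorphism.ext
    · show f.left ≫ 0 = 0
      simp
    · show f.right ≫ 0 = 0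
      simp
  zero_comp X {Y Z} f := by
    apply CommaMorphism.ext
    · show 0 ≫ f.left = 0
      simp
    · show 0 ≫ f.right = 0
      simp

end CommaZero

section ModComma

variable {R S : Type u} [Ring R] [Ring S]
  (F : ModuleCat.{u} R ⥤ ModuleCat.{u} S) [F.Additive]

/-- The object `(P, FP ⊕ Q)` of the comma category `(F, S-Mod)`, with structure map
`(1,0) : FP ⟶ FP ⊕ Q`; it is isomorphic to `(P, FP) ⊕ (0, Q)`. -/
def pairObj (P : ModuleCat.{u} R) (Q : ModuleCat.{u} S) :
    Comma F (𝟭 (ModuleCat.{u} S)) where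
  left := P
  right := ModuleCat.of S (F.obj P × Q)
  hom := ModuleCat.ofHom (LinearMap.inl S (F.obj P) Q)

/-- The morphism `(a, Fa ⊕ b) : (P₁, FP₁ ⊕ Q₁) ⟶ (P₀, FP₀ ⊕ Q₀)` in the comma
category `(F, S-Mod)`.  When `a = σ_A`, `b = σ_B` are projective presentations of `A` and
`B`, this is the induced projective presentation `σ` of `(0,B) ⊕ (A, FA)`. -/
def pairMap {P₁ P₀ : ModuleCat.{u} R} {Q₁ Q₀ : ModuleCat.{u} S}
    (a : P₁ ⟶ P₀) (b : Q₁ ⟶ Q₀) : pairObj F P₁ Q₁ ⟶ pairObj F P₀ Q₀ where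
  left := a
  right := ModuleCat.ofHom (LinearMap.prodMap (F.map a).hom b.hom)
  w := by
    apply ModuleCat.hom_ext
    apply LinearMap.ext
    intro x
    show ((LinearMap.inl S (F.obj P₀) Q₀).comp (F.map a).hom) x
        = ((LinearMap.prodMap (F.map a).hom b.hom).comp (LinearMap.inl S (F.obj P₁) Q₁)) x
    exact Prod.ext rfl (map_zero b.hom).symm

/-- The object `(M, 0)` of the comma category. -/
def leftObj (M : ModuleCat.{u} R) : Comma F (𝟭 (ModuleCat.{u} S)) where
  left := M
  right := ModuleCat.of S PUnit
  hom := 0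

/-- The object `(0, N)` of the comma category. -/
def rightObj (N : ModuleCat.{u} S) : Comma F (𝟭 (ModuleCat.{u} S)) where
  left := ModuleCat.of R PUnit
  right := N
  hom := 0

/-- The object `(M, FM)` of the comma category, with the identity structure map. -/
def diagObj (M : ModuleCat.{u} R) : Comma F (𝟭 (ModuleCat.{u} S)) where
  left := M
  right := F.obj M
  hom := 𝟙 (F.obj M)

end ModComma

/-- Corollary.  With `σ` the induced projective presentation of
`(0,B) ⊕ (A,FA)` in the comma category `(F, S-Mod)`:
(1) if `M ∈ D_{σ_A}` then `(M,0) ∈ D_σ`;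
(2) if `N ∈ D_{σ_B}` then `(0,N) ∈ D_σ`;
(3) if `M ∈ D_{σ_A}` and `FM ∈ D_{σ_B}` then `(M,FM)` (with the identity structure map)
belongs to `D_σ`. -/
theorem dclass_comma_objects {R S : Type u} [Ring R] [Ring S]
    (F : ModuleCat.{u} R ⥤ ModuleCat.{u} S) [F.Additive] [PreservesFiniteColimits F]
    {A : ModuleCat.{u} R} {B : ModuleCat.{u} S}
    (pA : ProjPres A) (pB : ProjPres B) :
    (∀ M : ModuleCat.{u} R, M ∈ Dclass pA.σ →
      leftObj F M ∈ Dclass (pairMap F pA.σ pB.σ)) ∧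
    (∀ N : ModuleCat.{u} S, N ∈ Dclass pB.σ →
      rightObj F N ∈ Dclass (pairMap F pA.σ pB.σ)) ∧
    (∀ M : ModuleCat.{u} R, M ∈ Dclass pA.σ → F.obj M ∈ Dclass pB.σ →
      diagObj F M ∈ Dclass (pairMap F pA.σ pB.σ)) := by
  refine ⟨?_, ?_, ?_⟩
  · -- (M, 0)
    intro M hM g
    obtain ⟨h₁, hh₁⟩ := hM g.left
    refine ⟨{ left := h₁, right := 0, w := ?_ }, ?_⟩
    · apply ModuleCat.hom_ext; apply LinearMap.ext; intro x; rfl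
    · apply CommaMorphism.ext
      · exact hh₁
      · apply ModuleCat.hom_ext; apply LinearMap.ext; intro x; rfl
  · -- (0, N)
    intro N hN g
    obtain ⟨h₂, hh₂⟩ := hN (ModuleCat.ofHom (g.right.hom.comp (LinearMap.inr S (F.obj pA.P₁) pB.P₁)))
    have hg0 : ∀ x : F.obj pA.P₁, g.right.hom (x, 0) = 0 := by
      intro x
      have := congrArg (fun (f : F.obj pA.P₁ ⟶ N) => f.hom x) g.w.symm
      simp [rightObj, pairObj] at this; exact this
    refine ⟨{ left := 0, right := ModuleCat.ofHom (h₂.hom.comp (LinearMap.snd S (F.obj pA.P₀) pB.P₀)),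
              w := ?_ }, ?_⟩
    · apply ModuleCat.hom_ext; apply LinearMap.ext; intro x
      show (0 : N) = h₂.hom ((LinearMap.inl S (F.obj pA.P₀) pB.P₀ x).2)
      simp
    · apply CommaMorphism.ext
      · apply ModuleCat.hom_ext; apply LinearMap.ext; intro x; rfl
      · apply ModuleCat.hom_ext; apply LinearMap.ext; rintro ⟨x, q⟩
        have : g.right.hom (x, q) = g.right.hom (x, 0) + g.right.hom (0, q) :=
          (congrArg g.right.hom (Prod.ext (add_zero x).symm (zero_add q).symm :
            ((x, q) : (pairObj F pA.P₁ pB.P₁).right) = (x, 0) + (0, q))).trans (map_add _ _ _)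
        show h₂.hom ((LinearMap.prodMap (F.map pA.σ).hom pB.σ.hom (x, q)).2) = g.right.hom (x, q)
        rw [this, hg0, zero_add]
        exact congrArg (fun (f : ↑pB.P₁ ⟶ N) => f.hom q) hh₂
  · -- (M, FM)
    intro M hM hFM g
    obtain ⟨h₁, hh₁⟩ := hM g.left
    obtain ⟨h₂, hh₂⟩ := hFM (ModuleCat.ofHom (g.right.hom.comp (LinearMap.inr S (F.obj pA.P₁) pB.P₁)))
    have hginl : ∀ x : F.obj pA.P₁, g.right.hom (x, 0) = (F.map g.left).hom x := by
      intro x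
      have := congrArg (fun (f : F.obj pA.P₁ ⟶ F.obj M) => f.hom x) g.w.symm
      simp [diagObj, pairObj] at this; exact this
    refine ⟨{ left := h₁,
              right := ModuleCat.ofHom ((F.map h₁).hom.comp (LinearMap.fst S (F.obj pA.P₀) pB.P₀)
                + h₂.hom.comp (LinearMap.snd S (F.obj pA.P₀) pB.P₀)),
              w := ?_ }, ?_⟩
    · apply ModuleCat.hom_ext; apply LinearMap.ext; intro x
      show (F.map h₁).hom x = (F.map h₁).hom ((LinearMap.inl S (F.obj pA.P₀) pB.P₀ x).1)
          + h₂.hom ((LinearMap.inl S (F.obj pA.P₀) pB.P₀ x).2)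
      simp
    · apply CommaMorphism.ext
      · exact hh₁
      · apply ModuleCat.hom_ext; apply LinearMap.ext; rintro ⟨x, q⟩
        have hsplit : g.right.hom (x, q) = g.right.hom (x, 0) + g.right.hom (0, q) :=
          (congrArg g.right.hom (Prod.ext (add_zero x).symm (zero_add q).symm :
            ((x, q) : (pairObj F pA.P₁ pB.P₁).right) = (x, 0) + (0, q))).trans (map_add _ _ _)
        show (F.map h₁).hom ((LinearMap.prodMap (F.map pA.σ).hom pB.σ.hom (x, q)).1)
            + h₂.hom ((LinearMap.prodMap (F.map pA.σ).hom pB.σ.hom (x, q)).2) = g.right.hom (x, q)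
        rw [hsplit, hginl]
        have h2q := congrArg (fun (f : ↑pB.P₁ ⟶ F.obj M) => f.hom q) hh₂
        have h1x := congrArg (fun (f : ↑pA.P₁ ⟶ M) => (F.map f).hom x) hh₁
        simp only [LinearMap.prodMap_apply]
        have : (F.map h₁).hom ((F.map pA.σ).hom x) = (F.map g.left).hom x := by
          have : F.map (pA.σ ≫ h₁) = F.map g.left := by rw [hh₁]; rfl
          have := congrArg (fun (f : F.obj pA.P₁ ⟶ F.obj M) => f.hom x) this
          simp [F.map_comp] at this; exact this
        rw [this]
        congr 1
end

section
/- Let A be a left R-module with projective presentation σ_A, B a left S-module with projective presentation σ_B, and σ the induced projective presentation of (0,B) ⊕ (A,FA) in (F, S-Mod). Assume F commutes with direct sums. Then D_σ is a torsion class (equivalently, closed under direct sums) if and only if both D_{σ_A} and D_{σ_B} are torsion classes. -/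
open CategoryTheory CategoryTheory.Limits

universe v u

section MyAux

open CategoryTheory CategoryTheory.Limits

/-- Any two maps into the `PUnit` module agree. -/
lemma to_punit_ext {R' : Type u} [Ring R'] {M : ModuleCat.{u} R'}
    (f g : M ⟶ ModuleCat.of R' PUnit) : f = g :=
  ModuleCat.hom_ext (LinearMap.ext fun _ => Subsingleton.elim _ _)

/-- Any two maps out of the `PUnit` module agree. -/
lemma from_punit_ext {R' : Type u} [Ring R'] {M : ModuleCat.{u} R'}
    (f g : ModuleCat.of R' PUnit ⟶ M) : f = g :=
  ModuleCat.hom_ext (LinearMap.ext fun x => by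
    have hx : x = 0 := Subsingleton.elim _ _
    rw [hx, map_zero, map_zero])

/-- The `PUnit` module belongs to every `Dclass`. -/
lemma punit_mem_dclass {R' : Type u} [Ring R'] {Q₁ Q₀ : ModuleCat.{u} R'} (b : Q₁ ⟶ Q₀) :
    (ModuleCat.of R' PUnit) ∈ Dclass b :=
  fun _ => ⟨0, to_punit_ext _ _⟩

/-- `Dclass σ` is closed under epimorphic images as soon as `P₁` is projective. -/
lemma dclass_closed_images {𝒞 : Type*} [Category 𝒞] {P₁ P₀ : 𝒞} (σ : P₁ ⟶ P₀)
    (hP : Projective P₁) {X Y : 𝒞} (f : X ⟶ Y) (hf : Epi f) (hX : X ∈ Dclass σ) :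
    Y ∈ Dclass σ := by
  intro g
  haveI := hP; haveI := hf
  obtain ⟨h, hh⟩ := hX (Projective.factorThru g f)
  exact ⟨h ≫ f, by rw [← Category.assoc, hh, Projective.factorThru_comp]⟩

/-- `Dclass σ` is closed under extensions when `P₁` and `P₀` are projective
(preadditive version). -/
lemma dclass_closed_extensions {𝒞 : Type*} [Category 𝒞] [Preadditive 𝒞]
    {P₁ P₀ : 𝒞} (σ : P₁ ⟶ P₀) (h1 : Projective P₁) (h0 : Projective P₀)
    (E : ShortComplex 𝒞) (hE : E.ShortExact)
    (m₁ : E.X₁ ∈ Dclass σ) (m₃ : E.X₃ ∈ Dclass σ) : E.X₂ ∈ Dclass σ := by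
  intro g
  haveI := h1; haveI := h0; haveI := hE.epi_g
  haveI := hE.exact.hasHomology
  obtain ⟨h₃, hh₃⟩ := m₃ (g ≫ E.g)
  have hd : (g - σ ≫ Projective.factorThru h₃ E.g) ≫ E.g = 0 := by
    rw [Preadditive.sub_comp, Category.assoc, Projective.factorThru_comp, hh₃, sub_self]
  haveI := hE.exact.epi_toCycles
  obtain ⟨m, hm⟩ := m₁ (Projective.factorThru (E.liftCycles _ hd) E.toCycles)
  refine ⟨Projective.factorThru h₃ E.g + m ≫ E.f, ?_⟩
  have h2 : (σ ≫ m) ≫ E.f = g - σ ≫ Projective.factorThru h₃ E.g := by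
    rw [hm, ← ShortComplex.toCycles_i, ← Category.assoc]
    rw [Projective.factorThru_comp, ShortComplex.liftCycles_i]
  rw [Preadditive.comp_add, ← Category.assoc, h2]
  abel

end MyAux
section MyComma

open CategoryTheory CategoryTheory.Limits

variable {R S : Type u} [Ring R] [Ring S]
  (F : ModuleCat.{u} R ⥤ ModuleCat.{u} S) [F.Additive]

@[simp] lemma comma_zero_left {X Y : Comma F (𝟭 (ModuleCat.{u} S))} :
    (0 : X ⟶ Y).left = 0 := rfl

@[simp] lemma comma_zero_right {X Y : Comma F (𝟭 (ModuleCat.{u} S))} :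
    (0 : X ⟶ Y).right = 0 := rfl

/-- The left component of an epimorphism in the comma category is an epimorphism. -/
lemma epi_left_of_epi {X Y : Comma F (𝟭 (ModuleCat.{u} S))} (f : X ⟶ Y) [Epi f] :
    Epi f.left := by
  rw [ModuleCat.epi_iff_range_eq_top]
  set N := LinearMap.range f.left.hom with hN
  let q : Y.left ⟶ ModuleCat.of R (↥Y.left ⧸ N) := ModuleCat.ofHom N.mkQ
  let g₁ : Y ⟶ leftObj F (ModuleCat.of R (↥Y.left ⧸ N)) :=
    { left := q, right := 0, w := to_punit_ext _ _ }
  let g₂ : Y ⟶ leftObj F (ModuleCat.of R (↥Y.left ⧸ N)) :=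
    { left := 0, right := 0, w := to_punit_ext _ _ }
  have hc : f ≫ g₁ = f ≫ g₂ := by
    apply CommaMorphism.ext
    · show f.left ≫ q = f.left ≫ (0 : Y.left ⟶ ModuleCat.of R (↥Y.left ⧸ N))
      rw [comp_zero]
      apply ModuleCat.hom_ext; apply LinearMap.ext; intro x
      show N.mkQ (f.left.hom x) = 0
      rw [Submodule.mkQ_apply]
      exact (Submodule.Quotient.mk_eq_zero N).2 (LinearMap.mem_range_self f.left.hom x)
    · exact to_punit_ext _ _
  have hg : g₁ = g₂ := (cancel_epi f).1 hc
  have hl : q = 0 := congrArg CommaMorphism.left hg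
  rw [Submodule.eq_top_iff']
  intro y
  have hy : q.hom y = 0 := by rw [hl]; rfl
  exact (Submodule.Quotient.mk_eq_zero N).1 hy

/-- The right component of an epimorphism in the comma category is an epimorphism,
provided `F` preserves epimorphisms. -/
lemma epi_right_of_epi [F.PreservesEpimorphisms]
    {X Y : Comma F (𝟭 (ModuleCat.{u} S))} (f : X ⟶ Y) [Epi f] :
    Epi f.right := by
  rw [ModuleCat.epi_iff_range_eq_top]
  set N := LinearMap.range f.right.hom ⊔ LinearMap.range Y.hom.hom with hN
  have hmem₁ : ∀ x, f.right.hom x ∈ N := fun x =>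
    Submodule.mem_sup_left (LinearMap.mem_range_self f.right.hom x)
  have hmem₂ : ∀ u, Y.hom.hom u ∈ N := fun u =>
    Submodule.mem_sup_right (LinearMap.mem_range_self Y.hom.hom u)
  let Z : Comma F (𝟭 (ModuleCat.{u} S)) :=
    { left := Y.left, right := ModuleCat.of S (↥Y.right ⧸ N), hom := 0 }
  let q : Y.right ⟶ ModuleCat.of S (↥Y.right ⧸ N) := ModuleCat.ofHom N.mkQ
  have hq0 : Y.hom ≫ q = 0 := by
    apply ModuleCat.hom_ext; apply LinearMap.ext; intro u
    show N.mkQ (Y.hom.hom u) = 0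
    rw [Submodule.mkQ_apply]
    exact (Submodule.Quotient.mk_eq_zero N).2 (hmem₂ u)
  let g₁ : Y ⟶ Z :=
    { left := 𝟙 Y.left
      right := q
      w := by
        show F.map (𝟙 Y.left) ≫ (0 : F.obj Y.left ⟶ ModuleCat.of S (↥Y.right ⧸ N))
          = Y.hom ≫ q
        rw [comp_zero, hq0] }
  let g₂ : Y ⟶ Z :=
    { left := 𝟙 Y.left
      right := 0
      w := by
        show F.map (𝟙 Y.left) ≫ (0 : F.obj Y.left ⟶ ModuleCat.of S (↥Y.right ⧸ N))
          = Y.hom ≫ (0 : Y.right ⟶ ModuleCat.of S (↥Y.right ⧸ N))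
        rw [comp_zero, comp_zero] }
  have hc : f ≫ g₁ = f ≫ g₂ := by
    apply CommaMorphism.ext
    · rfl
    · show f.right ≫ q = f.right ≫ (0 : Y.right ⟶ ModuleCat.of S (↥Y.right ⧸ N))
      rw [comp_zero]
      apply ModuleCat.hom_ext; apply LinearMap.ext; intro x
      show N.mkQ (f.right.hom x) = 0
      rw [Submodule.mkQ_apply]
      exact (Submodule.Quotient.mk_eq_zero N).2 (hmem₁ x)
  have hg : g₁ = g₂ := (cancel_epi f).1 hc
  have hr : q = 0 := congrArg CommaMorphism.right hg
  have hNtop : N = ⊤ := by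
    rw [Submodule.eq_top_iff']
    intro y
    have hy : q.hom y = 0 := by rw [hr]; rfl
    exact (Submodule.Quotient.mk_eq_zero N).1 hy
  haveI : Epi f.left := epi_left_of_epi F f
  haveI : Epi (F.map f.left) := F.map_epi f.left
  have hsurj : Function.Surjective (F.map f.left).hom :=
    (ModuleCat.epi_iff_surjective (F.map f.left)).1 inferInstance
  rw [eq_top_iff]
  rintro y -
  have hy : y ∈ N := hNtop ▸ Submodule.mem_top
  obtain ⟨a, ha, b, hb, rfl⟩ := Submodule.mem_sup.1 hy
  obtain ⟨x, rfl⟩ := ha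
  obtain ⟨u, rfl⟩ := hb
  obtain ⟨v, rfl⟩ := hsurj u
  have hw : Y.hom.hom ((F.map f.left).hom v) = f.right.hom (X.hom.hom v) :=
    LinearMap.congr_fun (congrArg ModuleCat.Hom.hom f.w) v
  refine ⟨x + (show ↥X.right from X.hom.hom v), ?_⟩
  rw [map_add]
  exact congrArg (fun t => f.right.hom x + t) hw.symm

/-- Difference of two parallel morphisms in the comma category. -/
def csub {X Y : Comma F (𝟭 (ModuleCat.{u} S))} (f g : X ⟶ Y) : X ⟶ Y where
  left := f.left - g.left
  right := f.right - g.right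
  w := by
    have hf := f.w; have hg := g.w
    simp only [Functor.id_map] at hf hg ⊢
    rw [F.map_sub, Preadditive.sub_comp, Preadditive.comp_sub, hf, hg]

/-- Sum of two parallel morphisms in the comma category. -/
def cadd {X Y : Comma F (𝟭 (ModuleCat.{u} S))} (f g : X ⟶ Y) : X ⟶ Y where
  left := f.left + g.left
  right := f.right + g.right
  w := by
    have hf := f.w; have hg := g.w
    simp only [Functor.id_map] at hf hg ⊢
    rw [F.map_add, Preadditive.add_comp, Preadditive.comp_add, hf, hg]

lemma comp_csub {X Y Z : Comma F (𝟭 (ModuleCat.{u} S))} (f : X ⟶ Y) (g h : Y ⟶ Z) :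
    f ≫ csub F g h = csub F (f ≫ g) (f ≫ h) := by
  apply CommaMorphism.ext
  · show f.left ≫ (g.left - h.left) = f.left ≫ g.left - f.left ≫ h.left
    rw [Preadditive.comp_sub]
  · show f.right ≫ (g.right - h.right) = f.right ≫ g.right - f.right ≫ h.right
    rw [Preadditive.comp_sub]

lemma eq_of_csub_eq_zero {X Y : Comma F (𝟭 (ModuleCat.{u} S))} {f g : X ⟶ Y}
    (h : csub F f g = 0) : f = g := by
  apply CommaMorphism.ext
  · have := congrArg CommaMorphism.left h
    rw [comma_zero_left] at this
    exact sub_eq_zero.1 this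
  · have := congrArg CommaMorphism.right h
    rw [comma_zero_right] at this
    exact sub_eq_zero.1 this

lemma csub_comp {X Y Z : Comma F (𝟭 (ModuleCat.{u} S))} (f g : X ⟶ Y) (h : Y ⟶ Z) :
    csub F f g ≫ h = csub F (f ≫ h) (g ≫ h) := by
  apply CommaMorphism.ext
  · show (f.left - g.left) ≫ h.left = f.left ≫ h.left - g.left ≫ h.left
    rw [Preadditive.sub_comp]
  · show (f.right - g.right) ≫ h.right = f.right ≫ h.right - g.right ≫ h.right
    rw [Preadditive.sub_comp]

lemma comp_cadd {X Y Z : Comma F (𝟭 (ModuleCat.{u} S))} (f : X ⟶ Y) (g h : Y ⟶ Z) :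
    f ≫ cadd F g h = cadd F (f ≫ g) (f ≫ h) := by
  apply CommaMorphism.ext
  · show f.left ≫ (g.left + h.left) = f.left ≫ g.left + f.left ≫ h.left
    rw [Preadditive.comp_add]
  · show f.right ≫ (g.right + h.right) = f.right ≫ g.right + f.right ≫ h.right
    rw [Preadditive.comp_add]

lemma csub_self {X Y : Comma F (𝟭 (ModuleCat.{u} S))} (f : X ⟶ Y) :
    csub F f f = 0 := by
  apply CommaMorphism.ext
  · show f.left - f.left = (0 : X ⟶ Y).left
    rw [comma_zero_left, sub_self]
  · show f.right - f.right = (0 : X ⟶ Y).right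
    rw [comma_zero_right, sub_self]

lemma cadd_csub_cancel {X Y : Comma F (𝟭 (ModuleCat.{u} S))} (f g : X ⟶ Y) :
    cadd F g (csub F f g) = f := by
  apply CommaMorphism.ext
  · show g.left + (f.left - g.left) = f.left
    abel
  · show g.right + (f.right - g.right) = f.right
    abel

/-- `Dclass σ` in the comma category is closed under extensions when the two
objects are projective. -/
lemma dclass_closed_extensions_comma {P₁ P₀ : Comma F (𝟭 (ModuleCat.{u} S))} (σ : P₁ ⟶ P₀)
    (h1 : Projective P₁) (h0 : Projective P₀)
    (E : ShortComplex (Comma F (𝟭 (ModuleCat.{u} S)))) (hE : E.ShortExact)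
    (m₁ : E.X₁ ∈ Dclass σ) (m₃ : E.X₃ ∈ Dclass σ) : E.X₂ ∈ Dclass σ := by
  intro g
  haveI := h1; haveI := h0; haveI := hE.epi_g
  obtain ⟨hD, hz⟩ := hE.exact.condition
  set L := hD.left with hL
  obtain ⟨h₃, hh₃⟩ := m₃ (g ≫ E.g)
  have hd : csub F g (σ ≫ Projective.factorThru h₃ E.g) ≫ E.g = 0 := by
    rw [csub_comp, Category.assoc, Projective.factorThru_comp, hh₃, csub_self]
  haveI : Epi L.f' := by
    constructor
    intro T u v huv
    have h0 : L.f' ≫ csub F u v = 0 := by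
      rw [comp_csub, huv, csub_self]
    obtain ⟨l, hl⟩ := CokernelCofork.IsColimit.desc' L.hπ' (csub F u v) h0
    apply eq_of_csub_eq_zero F
    rw [← hl, IsZero.eq_of_src hz l 0, comp_zero]
  obtain ⟨m, hm⟩ := m₁ (Projective.factorThru (L.liftK (csub F g (σ ≫ Projective.factorThru h₃ E.g)) hd) L.f')
  refine ⟨cadd F (Projective.factorThru h₃ E.g) (m ≫ E.f), ?_⟩
  have h2 : (σ ≫ m) ≫ E.f = csub F g (σ ≫ Projective.factorThru h₃ E.g) := by
    rw [hm, ← L.f'_i, ← Category.assoc, Projective.factorThru_comp,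
      ShortComplex.LeftHomologyData.liftK_i]
  rw [comp_cadd, ← Category.assoc, h2, cadd_csub_cancel]

end MyComma
section MyPair

open CategoryTheory CategoryTheory.Limits

variable {R S : Type u} [Ring R] [Ring S]
  (F : ModuleCat.{u} R ⥤ ModuleCat.{u} S) [F.Additive]

/-- Membership in `D_σ` for the comma category is componentwise. -/
lemma mem_dclass_pair {P₁ P₀ : ModuleCat.{u} R} {Q₁ Q₀ : ModuleCat.{u} S}
    (a : P₁ ⟶ P₀) (b : Q₁ ⟶ Q₀) (X : Comma F (𝟭 (ModuleCat.{u} S))) :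
    X ∈ Dclass (pairMap F a b) ↔ X.left ∈ Dclass a ∧ X.right ∈ Dclass b := by
  constructor
  · intro hX
    constructor
    · intro f
      let g : pairObj F P₁ Q₁ ⟶ X :=
        { left := f
          right := ModuleCat.ofHom
            (LinearMap.coprod (F.map f ≫ X.hom).hom (0 : Q₁ →ₗ[S] X.right))
          w := by
            apply ModuleCat.hom_ext
            dsimp only [pairObj, Functor.id_map]
            simp only [ModuleCat.hom_comp, ModuleCat.hom_ofHom]
            rw [LinearMap.coprod_inl] }
      obtain ⟨h, hh⟩ := hX g
      refine ⟨h.left, ?_⟩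
      have hl := congrArg CommaMorphism.left hh
      rw [Comma.comp_left] at hl
      exact hl
    · intro s
      let g : pairObj F P₁ Q₁ ⟶ X :=
        { left := 0
          right := ModuleCat.ofHom (LinearMap.coprod (0 : F.obj P₁ →ₗ[S] X.right) s.hom)
          w := by
            apply ModuleCat.hom_ext
            dsimp only [pairObj, Functor.id_map]
            apply LinearMap.ext; intro z
            show X.hom.hom ((F.map (0 : P₁ ⟶ X.left)).hom z)
              = (LinearMap.coprod (0 : F.obj P₁ →ₗ[S] X.right) s.hom) (z, 0)
            simp }
      obtain ⟨h, hh⟩ := hX g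
      refine ⟨ModuleCat.ofHom (h.right.hom ∘ₗ
        LinearMap.inr S (F.obj P₀) Q₀), ?_⟩
      apply ModuleCat.hom_ext; apply LinearMap.ext; intro y
      have key := LinearMap.congr_fun (congrArg ModuleCat.Hom.hom (congrArg CommaMorphism.right hh))
        ((((0 : ↥(F.obj P₁)), y) : ↥(F.obj P₁) × ↥Q₁))
      have e0 : (LinearMap.prodMap (F.map a).hom b.hom) (((0 : ↥(F.obj P₁)), y))
          = (((0 : ↥(F.obj P₀)), b.hom y) : ↥(F.obj P₀) × ↥Q₀) := by simp
      calc _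
          = h.right.hom ((LinearMap.inr S (F.obj P₀) Q₀) (b.hom y)) := rfl
        _ = h.right.hom (((0 : ↥(F.obj P₀)), b.hom y)) := by rw [LinearMap.inr_apply]
        _ = h.right.hom ((LinearMap.prodMap (F.map a).hom b.hom) (((0 : ↥(F.obj P₁)), y))) :=
            (congrArg h.right.hom e0).symm
        _ = g.right.hom (((0 : ↥(F.obj P₁)), y)) := key
        _ = s.hom y := by
            show (LinearMap.coprod (0 : F.obj P₁ →ₗ[S] X.right) s.hom)
              (((0 : ↥(F.obj P₁)), y)) = s.hom y
            rw [LinearMap.coprod_apply, LinearMap.zero_apply, zero_add]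
  · rintro ⟨hA, hB⟩ g
    obtain ⟨f', hf'⟩ := hA g.left
    obtain ⟨t, ht⟩ := hB (ModuleCat.ofHom (g.right.hom ∘ₗ
      LinearMap.inr S (F.obj P₁) Q₁))
    let XH : F.obj X.left ⟶ X.right := X.hom
    refine ⟨{ left := f'
              right := ModuleCat.ofHom (LinearMap.coprod (F.map f' ≫ XH).hom t.hom)
              w := by
                apply ModuleCat.hom_ext
                dsimp only [pairObj, Functor.id_map]
                simp only [ModuleCat.hom_comp, ModuleCat.hom_ofHom]
                rw [LinearMap.coprod_inl] }, ?_⟩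
    apply CommaMorphism.ext
    · exact hf'
    · have hw := g.w
      dsimp only [pairObj, Functor.id_map] at hw
      apply ModuleCat.hom_ext; apply LinearMap.ext
      rintro ⟨x, y⟩
      have e1 : t.hom (b.hom y) = g.right.hom (((0 : ↥(F.obj P₁)), y)) := by
        have h := LinearMap.congr_fun (congrArg ModuleCat.Hom.hom ht) y
        refine h.trans ?_
        show g.right.hom ((LinearMap.inr S (F.obj P₁) Q₁) y) = _
        rw [LinearMap.inr_apply]
      have e2 : XH.hom ((F.map g.left).hom x) = g.right.hom ((x, (0 : ↥Q₁))) := by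
        have h := LinearMap.congr_fun (congrArg ModuleCat.Hom.hom hw) x
        refine Eq.trans h ?_
        show g.right.hom ((LinearMap.inl S (F.obj P₁) Q₁) x) = _
        rw [LinearMap.inl_apply]
      have e3 : (F.map f' ≫ XH).hom ((F.map a).hom x) = XH.hom ((F.map g.left).hom x) := by
        rw [← hf']
        exact congrArg (fun φ => XH.hom (φ.hom x)) (F.map_comp a f').symm
      calc _
          = (F.map f' ≫ XH).hom ((F.map a).hom x) + t.hom (b.hom y) := rfl
        _ = XH.hom ((F.map g.left).hom x) + g.right.hom (((0 : ↥(F.obj P₁)), y)) := by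
            rw [e3, e1]
        _ = g.right.hom ((x, (0 : ↥Q₁))) + g.right.hom (((0 : ↥(F.obj P₁)), y)) := by rw [e2]
        _ = g.right.hom (x, y) := by
            refine (map_add g.right.hom _ _).symm.trans ?_
            exact congrArg g.right.hom (by simp :
              ((x, (0 : ↥Q₁)) : ↥(F.obj P₁) × ↥Q₁) + (((0 : ↥(F.obj P₁)), y) :
                ↥(F.obj P₁) × ↥Q₁) = (x, y))

/-- `pairObj` of projectives is projective in the comma category. -/
lemma pairObj_projective [F.PreservesEpimorphisms]
    (P : ModuleCat.{u} R) (Q : ModuleCat.{u} S)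
    (hP : Projective P) (hQ : Projective Q) : Projective (pairObj F P Q) := by
  constructor
  intro E X f e he
  haveI := he; haveI := hP; haveI := hQ
  haveI : Epi e.left := epi_left_of_epi F e
  haveI : Epi e.right := epi_right_of_epi F e
  let EH : F.obj E.left ⟶ E.right := E.hom
  let XH : F.obj X.left ⟶ X.right := X.hom
  let u' : P ⟶ E.left := Projective.factorThru f.left e.left
  let t : Q ⟶ E.right := Projective.factorThru
    (ModuleCat.ofHom (f.right.hom ∘ₗ
      LinearMap.inr S (F.obj P) Q)) e.right
  refine ⟨{ left := u'
            right := ModuleCat.ofHom (LinearMap.coprod (F.map u' ≫ EH).hom t.hom)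
            w := by
              apply ModuleCat.hom_ext
              dsimp only [pairObj, Functor.id_map]
              simp only [ModuleCat.hom_comp, ModuleCat.hom_ofHom]
              rw [LinearMap.coprod_inl] }, ?_⟩
  apply CommaMorphism.ext
  · show u' ≫ e.left = f.left
    exact Projective.factorThru_comp _ _
  · have hw := e.w
    dsimp only [Functor.id_map] at hw
    have hfw := f.w
    dsimp only [pairObj, Functor.id_map] at hfw
    apply ModuleCat.hom_ext; apply LinearMap.ext
    rintro ⟨x, y⟩
    have e1 : e.right.hom (t.hom y) = f.right.hom (((0 : ↥(F.obj P)), y)) := by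
      have hT : t ≫ e.right = ModuleCat.ofHom (f.right.hom ∘ₗ
          LinearMap.inr S (F.obj P) Q) := Projective.factorThru_comp _ _
      have h := LinearMap.congr_fun (congrArg ModuleCat.Hom.hom hT) y
      refine h.trans ?_
      show f.right.hom ((LinearMap.inr S (F.obj P) Q) y) = _
      rw [LinearMap.inr_apply]
    have e2 : e.right.hom ((F.map u' ≫ EH).hom x) = XH.hom ((F.map f.left).hom x) := by
      have h := LinearMap.congr_fun (congrArg ModuleCat.Hom.hom hw) ((F.map u').hom x)
      refine h.symm.trans ?_
      show XH.hom ((F.map e.left).hom ((F.map u').hom x)) = XH.hom ((F.map f.left).hom x)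
      have hu : u' ≫ e.left = f.left := Projective.factorThru_comp _ _
      rw [← hu]
      exact congrArg (fun φ => XH.hom (φ.hom x)) (F.map_comp u' e.left).symm
    have e3 : XH.hom ((F.map f.left).hom x) = f.right.hom ((x, (0 : ↥Q))) := by
      have h := LinearMap.congr_fun (congrArg ModuleCat.Hom.hom hfw) x
      refine Eq.trans h ?_
      show f.right.hom ((LinearMap.inl S (F.obj P) Q) x) = _
      rw [LinearMap.inl_apply]
    calc _
        = e.right.hom ((F.map u' ≫ EH).hom x + t.hom y) := rfl
      _ = e.right.hom ((F.map u' ≫ EH).hom x) + e.right.hom (t.hom y) := map_add _ _ _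
      _ = XH.hom ((F.map f.left).hom x) + f.right.hom (((0 : ↥(F.obj P)), y)) := by
          rw [e2, e1]
      _ = f.right.hom ((x, (0 : ↥Q))) + f.right.hom (((0 : ↥(F.obj P)), y)) := by rw [e3]
      _ = f.right.hom (x, y) := by
          refine (map_add f.right.hom _ _).symm.trans ?_
          exact congrArg f.right.hom (by simp :
            ((x, (0 : ↥Q)) : ↥(F.obj P) × ↥Q) + (((0 : ↥(F.obj P)), y) :
              ↥(F.obj P) × ↥Q) = (x, y))

end MyPair
section MyCofan

open CategoryTheory CategoryTheory.Limits

variable {R S : Type u} [Ring R] [Ring S]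
  (F : ModuleCat.{u} R ⥤ ModuleCat.{u} S) [F.Additive]

/-- The left components of a colimit cofan in the comma category form a colimit cofan. -/
noncomputable def leftCofan_isColimit {ι : Type u} {Xs : ι → Comma F (𝟭 (ModuleCat.{u} S))}
    (c : Cofan Xs) (hc : IsColimit c) :
    IsColimit (Cofan.mk c.pt.left (fun i => (c.inj i).left) :
      Cofan (fun i => (Xs i).left)) := by
  let D : ∀ _ : Cofan (fun i => (Xs i).left), Cofan Xs := fun s =>
    Cofan.mk (leftObj F s.pt)
      (fun i => { left := s.inj i, right := 0, w := to_punit_ext _ _ })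
  refine mkCofanColimit _ (fun s => (hc.desc (D s)).left) (fun s i => ?_) (fun s m hm => ?_)
  · exact congrArg CommaMorphism.left (hc.fac (D s) ⟨i⟩)
  · have hM : ({ left := m, right := 0, w := to_punit_ext _ _ } :
        c.pt ⟶ leftObj F s.pt) = hc.desc (D s) := by
      apply hc.uniq (D s)
      rintro ⟨i⟩
      apply CommaMorphism.ext
      · exact hm i
      · exact to_punit_ext _ _
    exact congrArg CommaMorphism.left hM

/-- The right components of a colimit cofan in the comma category form a colimit cofan,
provided `F` preserves coproducts. -/
noncomputable def rightCofan_isColimit [∀ J : Type u, PreservesColimitsOfShape (Discrete J) F]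
    {ι : Type u} {Xs : ι → Comma F (𝟭 (ModuleCat.{u} S))}
    (c : Cofan Xs) (hc : IsColimit c) :
    IsColimit (Cofan.mk c.pt.right (fun i => (c.inj i).right) :
      Cofan (fun i => (Xs i).right)) := by
  have hFl : IsColimit (F.mapCocone
      (Cofan.mk c.pt.left (fun i => (c.inj i).left) : Cofan (fun i => (Xs i).left))) :=
    isColimitOfPreserves F (leftCofan_isColimit F c hc)
  let D : ∀ _ : Cofan (fun i => (Xs i).right), Cofan Xs := fun s =>
    Cofan.mk
      ({ left := c.pt.left
         right := s.pt
         hom := hFl.desc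
           { pt := s.pt
             ι := Discrete.natTrans (fun j => (Xs j.as).hom ≫ s.inj j.as) } } :
        Comma F (𝟭 (ModuleCat.{u} S)))
      (fun i =>
        { left := (c.inj i).left
          right := s.inj i
          w := hFl.fac
            { pt := s.pt
              ι := Discrete.natTrans (fun j => (Xs j.as).hom ≫ s.inj j.as) } ⟨i⟩ })
  refine mkCofanColimit _ (fun s => (hc.desc (D s)).right) (fun s i => ?_) (fun s m hm => ?_)
  · exact congrArg CommaMorphism.right (hc.fac (D s) ⟨i⟩)
  · have key : c.pt.hom ≫ m = c.pt.hom ≫ (hc.desc (D s)).right := by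
      apply hFl.hom_ext
      rintro ⟨i⟩
      show F.map ((c.inj i).left) ≫ c.pt.hom ≫ m
        = F.map ((c.inj i).left) ≫ c.pt.hom ≫ (hc.desc (D s)).right
      have hwi := (c.inj i).w
      dsimp only [Functor.id_map] at hwi
      rw [← Category.assoc, ← Category.assoc, hwi, Category.assoc, Category.assoc]
      congr 1
      exact (hm i).trans (congrArg CommaMorphism.right (hc.fac (D s) ⟨i⟩)).symm
    have hM : ({ left := (hc.desc (D s)).left
                 right := m
                 w := by
                   have hdw := (hc.desc (D s)).w
                   dsimp only [Functor.id_map] at hdw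
                   exact hdw.trans key.symm } : c.pt ⟶ (D s).pt) = hc.desc (D s) := by
      apply hc.uniq (D s)
      rintro ⟨i⟩
      apply CommaMorphism.ext
      · have hfac := congrArg CommaMorphism.left (hc.fac (D s) ⟨i⟩)
        exact hfac
      · exact hm i
    exact congrArg CommaMorphism.right hM

/-- `leftObj` applied to a colimit cofan of modules gives a colimit cofan in the comma
category. -/
noncomputable def leftObjCofan_isColimit [∀ J : Type u, PreservesColimitsOfShape (Discrete J) F]
    {ι : Type u} {Ms : ι → ModuleCat.{u} R} (c : Cofan Ms) (hc : IsColimit c) :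
    IsColimit (Cofan.mk (leftObj F c.pt)
      (fun i => ({ left := c.inj i, right := 0, w := to_punit_ext _ _ } :
        leftObj F (Ms i) ⟶ leftObj F c.pt)) :
      Cofan (fun i => leftObj F (Ms i))) := by
  have hF : IsColimit (F.mapCocone c) := isColimitOfPreserves F hc
  refine mkCofanColimit _
    (fun s =>
      { left := hc.desc (Cofan.mk s.pt.left (fun i => (s.inj i).left))
        right := 0
        w := by
          have hzero : ∀ i, F.map ((s.inj i).left) ≫ s.pt.hom = 0 := fun i => by
            have hsw := (s.inj i).w
            dsimp only [leftObj, Functor.id_map] at hsw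
            rw [zero_comp] at hsw
            exact hsw
          dsimp only [Cofan.mk_pt, leftObj, Functor.id_map]
          rw [zero_comp]
          apply hF.hom_ext
          rintro ⟨i⟩
          dsimp only [Functor.mapCocone_ι_app]
          rw [comp_zero, ← Category.assoc, ← F.map_comp]
          exact (congrArg (fun φ => F.map φ ≫ s.pt.hom)
            (hc.fac (Cofan.mk s.pt.left (fun i => (s.inj i).left)) ⟨i⟩)).trans (hzero i) })
    (fun s i => ?_) (fun s m hm => ?_)
  · apply CommaMorphism.ext
    · exact hc.fac (Cofan.mk s.pt.left (fun i => (s.inj i).left)) ⟨i⟩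
    · exact from_punit_ext _ _
  · apply CommaMorphism.ext
    · refine hc.uniq (Cofan.mk s.pt.left (fun i => (s.inj i).left)) m.left ?_
      rintro ⟨i⟩
      exact congrArg CommaMorphism.left (hm i)
    · exact from_punit_ext _ _

/-- `rightObj` applied to a colimit cofan of modules gives a colimit cofan in the comma
category. -/
noncomputable def rightObjCofan_isColimit {ι : Type u} {Ns : ι → ModuleCat.{u} S}
    (c : Cofan Ns) (hc : IsColimit c) :
    IsColimit (Cofan.mk (rightObj F c.pt)
      (fun i =>
        ({ left := 𝟙 (ModuleCat.of R PUnit)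
           right := c.inj i
           w := by
             dsimp only [rightObj, Functor.id_map]
             rw [comp_zero, zero_comp] } :
          rightObj F (Ns i) ⟶ rightObj F c.pt)) :
      Cofan (fun i => rightObj F (Ns i))) := by
  refine mkCofanColimit _
    (fun s =>
      { left := 0
        right := hc.desc (Cofan.mk s.pt.right (fun i => (s.inj i).right))
        w := by
          dsimp only [Cofan.mk_pt, rightObj, Functor.id_map]
          exact (by rw [F.map_zero, zero_comp] :
            F.map (0 : ModuleCat.of R PUnit ⟶ s.pt.left) ≫ s.pt.hom = 0).trans zero_comp.symm })
    (fun s i => ?_) (fun s m hm => ?_)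
  · apply CommaMorphism.ext
    · exact from_punit_ext _ _
    · exact hc.fac (Cofan.mk s.pt.right (fun i => (s.inj i).right)) ⟨i⟩
  · apply CommaMorphism.ext
    · exact from_punit_ext _ _
    · refine hc.uniq (Cofan.mk s.pt.right (fun i => (s.inj i).right)) m.right ?_
      rintro ⟨i⟩
      exact congrArg CommaMorphism.right (hm i)

end MyCofan
/-- Lemma.  Assume `F` commutes with direct sums.  With `σ` the induced
projective presentation of `(0,B) ⊕ (A,FA)` in the comma category `(F, S-Mod)`, the class
`D_σ` is a torsion class if and only if both `D_{σ_A}` and `D_{σ_B}` are torsion classes. -/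
theorem dclass_comma_torsionClass_iff {R S : Type u} [Ring R] [Ring S]
    (F : ModuleCat.{u} R ⥤ ModuleCat.{u} S) [F.Additive] [PreservesFiniteColimits F]
    [∀ J : Type u, PreservesColimitsOfShape (Discrete J) F]
    {A : ModuleCat.{u} R} {B : ModuleCat.{u} S}
    (pA : ProjPres A) (pB : ProjPres B) :
    IsTorsionClass (Dclass (pairMap F pA.σ pB.σ)) ↔
      IsTorsionClass (Dclass pA.σ) ∧ IsTorsionClass (Dclass pB.σ) := by
  constructor
  · rintro ⟨himg, hsum, hext⟩
    constructor
    · refine ⟨fun X Y f hf hX => dclass_closed_images pA.σ pA.projective₁ f hf hX, ?_,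
        fun E hE h1 h3 => dclass_closed_extensions pA.σ pA.projective₁ pA.projective₀ E hE h1 h3⟩
      intro ι Ms c hc hmem
      have hpt := hsum ι _ _ (leftObjCofan_isColimit F c hc)
        (fun i => (mem_dclass_pair F pA.σ pB.σ (leftObj F (Ms i))).2
          ⟨hmem i, punit_mem_dclass pB.σ⟩)
      exact ((mem_dclass_pair F pA.σ pB.σ (leftObj F c.pt)).1 hpt).1
    · refine ⟨fun X Y f hf hX => dclass_closed_images pB.σ pB.projective₁ f hf hX, ?_,
        fun E hE h1 h3 => dclass_closed_extensions pB.σ pB.projective₁ pB.projective₀ E hE h1 h3⟩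
      intro ι Ns c hc hmem
      have hpt := hsum ι _ _ (rightObjCofan_isColimit F c hc)
        (fun i => (mem_dclass_pair F pA.σ pB.σ (rightObj F (Ns i))).2
          ⟨punit_mem_dclass pA.σ, hmem i⟩)
      exact ((mem_dclass_pair F pA.σ pB.σ (rightObj F c.pt)).1 hpt).2
  · rintro ⟨⟨haimg, hasum, haext⟩, ⟨hbimg, hbsum, hbext⟩⟩
    have hproj1 : Projective (pairObj F pA.P₁ pB.P₁) :=
      pairObj_projective F pA.P₁ pB.P₁ pA.projective₁ pB.projective₁
    have hproj0 : Projective (pairObj F pA.P₀ pB.P₀) :=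
      pairObj_projective F pA.P₀ pB.P₀ pA.projective₀ pB.projective₀
    refine ⟨fun X Y f hf hX => dclass_closed_images (pairMap F pA.σ pB.σ) hproj1 f hf hX, ?_,
      fun E hE h1 h3 =>
        dclass_closed_extensions_comma F (pairMap F pA.σ pB.σ) hproj1 hproj0 E hE h1 h3⟩
    intro ι Xs c hc hmem
    refine (mem_dclass_pair F pA.σ pB.σ c.pt).2 ⟨?_, ?_⟩
    · exact hasum ι _ _ (leftCofan_isColimit F c hc)
        (fun i => ((mem_dclass_pair F pA.σ pB.σ (Xs i)).1 (hmem i)).1)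
    · exact hbsum ι _ _ (rightCofan_isColimit F c hc)
        (fun i => ((mem_dclass_pair F pA.σ pB.σ (Xs i)).1 (hmem i)).2)
end
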